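/- arXiv:2605.28570 — 2 statements merged into one kernel-verified Lean document; each statement's English description precedes it below -/
import Mathlib

section
/- Every overlap-free binary square has length either 2^i or 3·2^i for some i ≥ 1. -/
/-- Thue–Morse morphism: μ(0)=01, μ(1)=10, encoding 0 = false, 1 = true. -/
def mu (w : List Bool) : List Bool := w.flatMap fun b => [b, !b]

/-- A word is an overlap if it has the form a·x·a·x·a for a letter a. -/
def IsOverlap (w : List Bool) : Prop :=
  ∃ (a : Bool) (x : List Bool), w = [a] ++ x ++ [a] ++ x ++ [a]

/-- A word contains an overlap as a factor. -/
def HasOverlap (w : List Bool) : Prop := ∃ f, f <:+: w ∧ IsOverlap f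

/-- A word is overlap-free if no factor is an overlap. -/
def OverlapFree (w : List Bool) : Prop := ∀ f, f <:+: w → ¬ IsOverlap f
lemma overlapFree_iff (w : List Bool) : OverlapFree w ↔ ¬ HasOverlap w := by
  unfold OverlapFree HasOverlap; push_neg; rfl

lemma HasOverlap.mono {v w : List Bool} (h : v <:+: w) : HasOverlap v → HasOverlap w :=
  fun ⟨f, hf, ho⟩ => ⟨f, hf.trans h, ho⟩

lemma OverlapFree.infix {v w : List Bool} (hof : OverlapFree w) (h : v <:+: w) :
    OverlapFree v := fun f hf => hof f (hf.trans h)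

@[simp] lemma mu_nil : mu [] = [] := rfl
@[simp] lemma mu_cons (b : Bool) (l : List Bool) : mu (b :: l) = b :: (!b) :: mu l := rfl
@[simp] lemma mu_append (l₁ l₂ : List Bool) : mu (l₁ ++ l₂) = mu l₁ ++ mu l₂ := by
  induction l₁ with
  | nil => rfl
  | cons a t ih => simp [ih]
@[simp] lemma mu_singleton (b : Bool) : mu [b] = [b, !b] := rfl

@[simp] lemma mu_length (l : List Bool) : (mu l).length = 2 * l.length := by
  induction l with
  | nil => rfl
  | cons a t ih => simp [ih]; ring

lemma mu_getElem_even (l : List Bool) (j : ℕ) (h : j < l.length)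
    (h' : 2 * j < (mu l).length) : (mu l)[2 * j] = l[j] := by
  induction l generalizing j with
  | nil => simp at h
  | cons a t ih =>
    cases j with
    | zero => simp
    | succ k =>
      have hk : k < t.length := by simpa using h
      have h2 : 2 * (k + 1) = (2 * k) + 2 := by ring
      simp only [mu_cons, h2]
      simpa using ih k hk (by simp; omega)

lemma mu_getElem_odd (l : List Bool) (j : ℕ) (h : j < l.length)
    (h' : 2 * j + 1 < (mu l).length) : (mu l)[2 * j + 1] = !l[j] := by
  induction l generalizing j with
  | nil => simp at h
  | cons a t ih =>
    cases j with
    | zero => simp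
    | succ k =>
      have hk : k < t.length := by simpa using h
      have h2 : 2 * (k + 1) + 1 = (2 * k + 1) + 2 := by ring
      simp only [mu_cons, h2]
      simpa using ih k hk (by simp; omega)

/-- overlap in y yields an overlap inside `(mu y).dropLast`. -/
lemma hasOverlap_mu_dropLast {y : List Bool} (h : HasOverlap y) :
    HasOverlap ((mu y).dropLast) := by
  obtain ⟨f, ⟨l, r, hlr⟩, a, x, hfo⟩ := h
  subst hfo
  set ov : List Bool := [a] ++ ([!a] ++ mu x) ++ [a] ++ ([!a] ++ mu x) ++ [a] with hov
  have hmu : mu y = (mu l ++ ov) ++ ([!a] ++ mu r) := by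
    rw [← hlr]; simp [hov, List.append_assoc]
  refine ⟨ov, ?_, ⟨a, [!a] ++ mu x, rfl⟩⟩
  rw [hmu, List.dropLast_append_of_ne_nil (by simp)]
  exact ⟨mu l, ([!a] ++ mu r).dropLast, by simp [List.append_assoc]⟩

lemma hasOverlap_mu {y : List Bool} (h : HasOverlap y) : HasOverlap (mu y) :=
  (hasOverlap_mu_dropLast h).mono (List.dropLast_prefix _).isInfix
instance : DecidablePred IsOverlap := fun f =>
  decidable_of_iff (∃ k < f.length, ∃ a : Bool,
      f = [a] ++ (f.drop 1).take k ++ [a] ++ (f.drop 1).take k ++ [a]) <| by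
    constructor
    · rintro ⟨k, -, a, h⟩; exact ⟨a, _, h⟩
    · rintro ⟨a, x, h⟩
      refine ⟨x.length, by simp [h], a, ?_⟩
      have : (f.drop 1).take x.length = x := by
        rw [h]; simp
      rw [this]; exact h

instance : DecidablePred HasOverlap := fun w =>
  decidable_of_iff (∃ t ∈ w.tails, ∃ f ∈ t.inits, IsOverlap f) <| by
    constructor
    · rintro ⟨t, ht, f, hf, ho⟩
      exact ⟨f, List.infix_iff_prefix_suffix.2 ⟨t, (List.mem_inits _ _).1 hf |>.trans (List.prefix_refl t) |>.trans ⟨[], by simp⟩, (List.mem_tails _ _).1 ht⟩, ho⟩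
    · rintro ⟨f, hinf, ho⟩
      obtain ⟨t, hp, hs⟩ := List.infix_iff_prefix_suffix.1 hinf
      exact ⟨t, (List.mem_tails _ _).2 hs, f, (List.mem_inits _ _).2 hp, ho⟩

def allB : ℕ → List (List Bool)
  | 0 => [[]]
  | n + 1 => (allB n).flatMap fun l => [false :: l, true :: l]

lemma mem_allB (x : List Bool) : x ∈ allB x.length := by
  induction x with
  | nil => simp [allB]
  | cons a t ih =>
    simp only [List.length_cons, allB, List.mem_flatMap]
    exact ⟨t, ih, by cases a <;> simp⟩

lemma no_square_5' : ∀ x ∈ allB 5, HasOverlap (x ++ x) := by decide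
set_option maxHeartbeats 4000000 in
set_option maxRecDepth 10000 in
lemma no_square_7' : ∀ x ∈ allB 7, HasOverlap (x ++ x) := by decide

lemma no_square_5 (x : List Bool) (h : x.length = 5) : HasOverlap (x ++ x) := by
  have hm := mem_allB x
  rw [h] at hm
  exact no_square_5' x hm

lemma no_square_7 (x : List Bool) (h : x.length = 7) : HasOverlap (x ++ x) := by
  have hm := mem_allB x
  rw [h] at hm
  exact no_square_7' x hm
def E : List (List Bool) := [[], [false], [true], [false, false], [true, true]]

lemma nil_mem_E : ([] : List Bool) ∈ E := by simp [E]
lemma one_mem_E (a : Bool) : [a] ∈ E := by cases a <;> simp [E]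
lemma two_mem_E (a : Bool) : [a, a] ∈ E := by cases a <;> simp [E]
lemma mem_E_elim {p : List Bool} (h : p ∈ E) :
    p = [] ∨ (∃ b, p = [b]) ∨ (∃ b, p = [b, b]) := by
  simp only [E, List.mem_cons, List.not_mem_nil, or_false] at h
  rcases h with rfl | rfl | rfl | rfl | rfl
  · exact Or.inl rfl
  · exact Or.inr (Or.inl ⟨false, rfl⟩)
  · exact Or.inr (Or.inl ⟨true, rfl⟩)
  · exact Or.inr (Or.inr ⟨false, rfl⟩)
  · exact Or.inr (Or.inr ⟨true, rfl⟩)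

lemma bool_cases (d a : Bool) : a = d ∨ d = !a := by
  cases a <;> cases d <;> simp

lemma muFactorization (w : List Bool) (hof : OverlapFree w) :
    ∃ p y s, p ∈ E ∧ s ∈ E ∧ w = p ++ mu y ++ s := by
  induction w using List.reverseRecOn with
  | nil => exact ⟨[], [], [], nil_mem_E, nil_mem_E, rfl⟩
  | append_singleton w c ih =>
    have hof' : OverlapFree w := hof.infix ⟨[], [c], by simp⟩
    obtain ⟨p, y, s, hp, hs, heq⟩ := ih hof'
    subst heq
    rcases mem_E_elim hs with rfl | ⟨a, rfl⟩ | ⟨a, rfl⟩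
    · exact ⟨p, y, [c], hp, one_mem_E c, by simp⟩
    · rcases bool_cases c a with rfl | rfl
      · exact ⟨p, y, [a, a], hp, two_mem_E a, by simp [List.append_assoc]⟩
      · exact ⟨p, y ++ [a], [], hp, nil_mem_E, by simp [List.append_assoc]⟩
    · rcases bool_cases c a with rfl | rfl
      · exact absurd (⟨a, [], by simp⟩ : IsOverlap [a, a, a])
          (hof [a, a, a] ⟨p ++ mu y, [], by simp [List.append_assoc]⟩)
      · rcases y.eq_nil_or_concat with rfl | ⟨y₂, d, rfl⟩
        · rcases mem_E_elim hp with rfl | ⟨b, rfl⟩ | ⟨b, rfl⟩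
          · exact ⟨[a], [a], [], one_mem_E a, nil_mem_E, by simp⟩
          · rcases bool_cases b a with rfl | rfl
            · exact absurd (⟨a, [], by simp⟩ : IsOverlap [a, a, a])
                (hof [a, a, a] ⟨[], [!a], by simp⟩)
            · exact ⟨[], [!a, a], [], nil_mem_E, nil_mem_E, by simp⟩
          · rcases bool_cases b a with rfl | rfl
            · exact absurd (⟨a, [], by simp⟩ : IsOverlap [a, a, a])
                (hof [a, a, a] ⟨[], [a, !a], by simp⟩)
            · exact ⟨[!a], [!a, a], [], one_mem_E _, nil_mem_E, by simp⟩
        · rw [List.concat_eq_append] at *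
          rcases bool_cases d a with rfl | rfl
          · rcases y₂.eq_nil_or_concat with rfl | ⟨y₃, e, rfl⟩
            · rcases mem_E_elim hp with rfl | ⟨b, rfl⟩ | ⟨b, rfl⟩
              · exact ⟨[a], [!a, a], [], one_mem_E _, nil_mem_E, by simp⟩
              · rcases bool_cases b a with rfl | rfl
                · exact ⟨[a, a], [!a, a], [], two_mem_E _, nil_mem_E, by simp⟩
                · exact ⟨[], [!a, !a, a], [], nil_mem_E, nil_mem_E, by simp⟩
              · rcases bool_cases b a with rfl | rfl
                · exact absurd (⟨a, [], by simp⟩ : IsOverlap [a, a, a])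
                    (hof [a, a, a] ⟨[], [!a, a, a, !a], by simp⟩)
                · exact ⟨[!a], [!a, !a, a], [], one_mem_E _, nil_mem_E, by simp⟩
            · rw [List.concat_eq_append] at *
              rcases bool_cases e a with rfl | rfl
              · exact absurd (⟨a, [!a], by simp⟩ : IsOverlap [a, !a, a, !a, a])
                  (hof [a, !a, a, !a, a]
                    ⟨p ++ mu y₃, [a, !a], by simp [List.append_assoc]⟩)
              · exact absurd (⟨!a, [a, a], by simp⟩ :
                    IsOverlap [!a, a, a, !a, a, a, !a])
                  (hof [!a, a, a, !a, a, a, !a]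
                    ⟨p ++ mu y₃, [], by simp [List.append_assoc]⟩)
          · exact absurd (⟨a, [], by simp⟩ : IsOverlap [a, a, a])
              (hof [a, a, a] ⟨p ++ mu y₂ ++ [!a], [!a], by simp [List.append_assoc]⟩)
lemma getElem_mid (p m s : List Bool) (i : ℕ) (hi : i < m.length)
    (hw : p.length + i < (p ++ (m ++ s)).length) :
    (p ++ (m ++ s))[p.length + i] = m[i] := by
  rw [List.getElem_append_right (by omega : p.length ≤ p.length + i)]
  simp only [Nat.add_sub_cancel_left]
  exact List.getElem_append_left hi

lemma getElem_right (p m s : List Bool) (t : ℕ) (ht : t < s.length)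
    (hw : p.length + m.length + t < (p ++ (m ++ s)).length) :
    (p ++ (m ++ s))[p.length + m.length + t] = s[t] := by
  rw [List.getElem_append_right (show p.length ≤ p.length + m.length + t by omega)]
  rw [List.getElem_append_right
    (show m.length ≤ p.length + m.length + t - p.length by omega)]
  congr 1
  omega

lemma sq_period (x : List Bool) (i : ℕ)
    (h2 : i + x.length < (x ++ x).length) (h1 : i < (x ++ x).length) :
    (x ++ x)[i] = (x ++ x)[i + x.length] := by
  have hl : (x ++ x).length = x.length + x.length := by simp
  have hi : i < x.length := by omega
  rw [List.getElem_append_left hi,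
      List.getElem_append_right (by omega : x.length ≤ i + x.length)]
  congr 1
  omega

lemma take_succ_eq (l : List Bool) (k : ℕ) (h : k < l.length) :
    l.take (k + 1) = l.take k ++ [l[k]] := by
  rw [List.take_succ, List.getElem?_eq_getElem h]
  rfl

lemma triple_infix (y : List Bool) (m : ℕ) (h : m + 2 < y.length) :
    [y[m], y[m + 1], y[m + 2]] <:+: y := by
  have h3 : y.drop m = y[m] :: y[m + 1] :: y[m + 2] :: y.drop (m + 3) := by
    rw [← List.getElem_cons_drop (as := y) (i := m) (by omega),
        ← List.getElem_cons_drop (as := y) (i := m + 1) (by omega),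
        ← List.getElem_cons_drop (as := y) (i := m + 2) (by omega)]
  have hpre : [y[m], y[m + 1], y[m + 2]] <+: y.drop m :=
    ⟨y.drop (m + 3), by rw [h3]; rfl⟩
  exact hpre.isInfix.trans (y.drop_suffix m).isInfix

lemma dropLast_pair (A : List Bool) (b c : Bool) :
    (A ++ [b, c]).dropLast = A ++ [b] := by
  rw [show A ++ [b, c] = (A ++ [b]) ++ [c] by simp, List.dropLast_concat]

lemma mem_E_len {p : List Bool} (h : p ∈ E) : p.length ≤ 2 := by
  rcases mem_E_elim h with rfl | ⟨b, rfl⟩ | ⟨b, rfl⟩ <;> simp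

lemma main_lemma : ∀ n : ℕ, ∀ x : List Bool, x.length = n → 1 ≤ n →
    OverlapFree (x ++ x) → ∃ j, n = 2 ^ j ∨ n = 3 * 2 ^ j := by
  intro n
  induction n using Nat.strong_induction_on with
  | _ n IH =>
    intro x hlen hpos hof
    by_cases h8 : n < 8
    · interval_cases n
      · exact ⟨0, Or.inl rfl⟩
      · exact ⟨1, Or.inl rfl⟩
      · exact ⟨0, Or.inr rfl⟩
      · exact ⟨2, Or.inl rfl⟩
      · exact absurd (no_square_5 x hlen) ((overlapFree_iff _).1 hof)
      · exact ⟨1, Or.inr rfl⟩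
      · exact absurd (no_square_7 x hlen) ((overlapFree_iff _).1 hof)
    · push_neg at h8
      obtain ⟨p, y, s, hpE, hsE, heq⟩ := muFactorization (x ++ x) hof
      rw [List.append_assoc] at heq
      have hxx : (x ++ x).length = 2 * n := by
        rw [List.length_append, hlen]; omega
      have hlen2 : 2 * n = p.length + (2 * y.length + s.length) := by
        have := congrArg List.length heq
        rw [hxx] at this
        simp only [List.length_append, mu_length] at this
        omega
      have hp2 := mem_E_len hpE
      have hs2 := mem_E_len hsE
      have hnotov : ¬ HasOverlap (x ++ x) := (overlapFree_iff _).1 hof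
      have hmuy : (mu y).length = 2 * y.length := mu_length y
      have hmuinf : mu y <:+: x ++ x := ⟨p, s, by rw [heq]; simp [List.append_assoc]⟩
      have hval : ∀ i (hi : i < (mu y).length)
          (hw : p.length + i < (x ++ x).length),
          (x ++ x)[p.length + i] = (mu y)[i]'hi := by
        intro i hi hw
        rw [List.getElem_of_eq heq]
        exact getElem_mid p (mu y) s i hi (by rw [← heq]; exact hw)
      have hG : ∀ i (h1 : i < (mu y).length) (h2 : i + n < (mu y).length),
          (mu y)[i]'h1 = (mu y)[i + n]'h2 := by
        intro i h1 h2
        have e1 := hval i h1 (by omega)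
        have e2 := hval (i + n) h2 (by omega)
        rw [← e1, ← e2]
        have hper := sq_period x (p.length + i) (by omega) (by omega)
        rw [hper, getElem_congr_idx (by omega :
          p.length + i + x.length = p.length + (i + n))]
      have keyS : ∀ (i t : ℕ) (hi : i < (mu y).length) (ht : t < s.length)
          (hidx : i + n = (mu y).length + t),
          (mu y)[i]'hi = s[t]'ht := by
        intro i t hi ht hidx
        have h1 := (hval i hi (by omega)).symm
        have hper := sq_period x (p.length + i) (by omega)
          (by omega)
        have h2 : (x ++ x)[p.length + i + x.length]'(by omega)
            = s[t]'ht := by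
          rw [getElem_congr_idx (show p.length + i + x.length =
              p.length + (mu y).length + t by omega),
            List.getElem_of_eq heq]
          exact getElem_right p (mu y) s t ht (by rw [← heq]; omega)
        rw [h1, hper, h2]
      have keyP : ∀ (t i : ℕ) (ht : t < p.length) (hi : i < (mu y).length)
          (hidx : t + n = p.length + i),
          p[t]'ht = (mu y)[i]'hi := by
        intro t i ht hi hidx
        have h1 : (x ++ x)[t]'(by omega) = p[t]'ht := by
          rw [List.getElem_of_eq heq]
          exact List.getElem_append_left ht
        have hper := sq_period x t (by omega) (by omega)
        have h2 : (x ++ x)[t + x.length]'(by omega)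
            = (mu y)[i]'hi := by
          rw [getElem_congr_idx (show t + x.length = p.length + i by omega)]
          exact hval i hi (by omega)
        rw [← h2, ← hper, h1]
      rcases Nat.even_or_odd n with ⟨m, hm⟩ | ⟨m, hm⟩
      · -- n even, n = 2m
        have hm4 : 4 ≤ m := by omega
        rcases mem_E_elim hpE with rfl | ⟨a, rfl⟩ | ⟨a, rfl⟩
        · rcases mem_E_elim hsE with rfl | ⟨b, rfl⟩ | ⟨b, rfl⟩
          · -- (ε, ε) : y = z ++ z
            have hyl : y.length = n := by simp at hlen2; omega
            have hrel : ∀ j (hj : j < m), y[j]'(by omega) = y[j + m]'(by omega) := by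
              intro j hj
              have := hG (2 * j) (by omega) (by omega)
              rw [mu_getElem_even y j (by omega) (by omega)] at this
              rw [this, getElem_congr_idx (by omega : 2 * j + n = 2 * (j + m)),
                mu_getElem_even y (j + m) (by omega) (by omega)]
            have hdt : y.drop m = y.take m := by
              apply List.ext_getElem (by simp; omega)
              intro j h1 h2
              have hj : j < m := by simp at h2; omega
              rw [List.getElem_drop, List.getElem_take]
              rw [getElem_congr_idx (show m + j = j + m by omega)]
              exact (hrel j hj).symm
            have hzz : y = y.take m ++ y.take m := by
              conv_lhs => rw [← List.take_append_drop m y]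
              rw [hdt]
            have hofz : OverlapFree (y.take m ++ y.take m) := by
              rw [overlapFree_iff]
              intro h
              rw [← hzz] at h
              exact hnotov ((hasOverlap_mu h).mono hmuinf)
            obtain ⟨j, hj⟩ := IH m (by omega) (y.take m)
              (by simp [hyl]; omega) (by omega) hofz
            exact ⟨j + 1, by rcases hj with h | h <;> [left; right] <;>
              rw [pow_succ] <;> omega⟩
          · simp at hlen2; omega
          · -- (ε, [b,b]) : impossible
            simp only [List.length_nil, List.length_cons] at keyP keyS
            have hyl : y.length = n - 1 := by simp at hlen2; omega
            have u1 := keyS (2 * (m - 1)) 0 (by omega) (by simp)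
              (by omega)
            have u2 := keyS (2 * (m - 1) + 1) 1 (by omega) (by simp)
              (by omega)
            rw [mu_getElem_even y (m - 1) (by omega) (by omega)] at u1
            rw [mu_getElem_odd y (m - 1) (by omega) (by omega)] at u2
            simp only [List.getElem_cons_zero, List.getElem_cons_succ] at u1 u2
            simp [u1] at u2
        · rcases mem_E_elim hsE with rfl | ⟨b, rfl⟩ | ⟨b, rfl⟩
          · simp at hlen2; omega
          · -- ([a],[b]) : the conjugate square case
            simp only [List.length_nil, List.length_cons] at keyP keyS
            have hyl : y.length = n - 1 := by simp at hlen2; omega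
            have hrel : ∀ j (hj : j + m < y.length),
                y[j]'(by omega) = y[j + m]'(by omega) := by
              intro j hj
              have := hG (2 * j) (by omega) (by omega)
              rw [mu_getElem_even y j (by omega) (by omega)] at this
              rw [this, getElem_congr_idx (by omega : 2 * j + n = 2 * (j + m)),
                mu_getElem_even y (j + m) (by omega) (by omega)]
            have hb : ∀ (h : m - 1 < y.length), y[m - 1]'h = b := by
              intro h
              have u1 := keyS (2 * (m - 1)) 0 (by omega) (by simp)
                (by omega)
              rw [mu_getElem_even y (m - 1) (by omega) (by omega)] at u1
              simpa using u1
            have ha : a = !b := by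
              have u2 := keyP 0 (2 * (m - 1) + 1) (by simp) (by omega)
                (by omega)
              rw [mu_getElem_odd y (m - 1) (by omega) (by omega)] at u2
              rw [hb] at u2
              simpa using u2
            have hz'len : (y.take (m - 1)).length = m - 1 := by
              simp [hyl]; omega
            have hy_struct : y = y.take (m - 1) ++ ([b] ++ y.take (m - 1)) := by
              apply List.ext_getElem (by simp [hyl]; omega)
              intro j h1 h2
              rcases lt_trichotomy j (m - 1) with hj | hj | hj
              · exact ((List.getElem_append_left (by omega)).trans
                  (List.getElem_take)).symm
              · have e1 : (y.take (m - 1) ++ ([b] ++ y.take (m - 1)))[j]'h2 =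
                    ([b] ++ y.take (m - 1))[j - (y.take (m - 1)).length]'(by
                      simp [hz'len]; omega) :=
                  List.getElem_append_right (by omega)
                have e2 : ([b] ++ y.take (m - 1))[j - (y.take (m - 1)).length]'(by
                      simp [hz'len]; omega) =
                    ([b] ++ y.take (m - 1))[0]'(by simp) :=
                  getElem_congr_idx (by omega)
                have e3 : ([b] ++ y.take (m - 1))[0]'(by simp) = b := rfl
                have e4 : y[j]'h1 = y[m - 1]'(by omega) := getElem_congr_idx hj
                exact (e4.trans (hb _)).trans (e1.trans (e2.trans e3)).symm
              · have e1 : (y.take (m - 1) ++ ([b] ++ y.take (m - 1)))[j]'h2 =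
                    ([b] ++ y.take (m - 1))[j - (y.take (m - 1)).length]'(by
                      simp [hz'len]; omega) :=
                  List.getElem_append_right (by omega)
                have e2 : ([b] ++ y.take (m - 1))[j - (y.take (m - 1)).length]'(by
                      simp [hz'len]; omega) =
                    ([b] ++ y.take (m - 1))[(j - m) + 1]'(by simp [hz'len]; omega) :=
                  getElem_congr_idx (by omega)
                have e3 : ([b] ++ y.take (m - 1))[(j - m) + 1]'(by simp [hz'len]; omega) =
                    (y.take (m - 1))[j - m]'(by simp [hz'len]; omega) := rfl
                have e4 : (y.take (m - 1))[j - m]'(by simp [hz'len]; omega) =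
                    y[j - m]'(by omega) := List.getElem_take
                have e5 : y[j]'h1 = y[(j - m) + m]'(by omega) := getElem_congr_idx (by omega)
                exact (e5.trans (hrel (j - m) (by omega)).symm).trans
                  (e1.trans (e2.trans (e3.trans e4))).symm
            have hz : y.take m = y.take (m - 1) ++ [b] := by
              rw [show m = (m - 1) + 1 by omega, take_succ_eq y (m - 1) (by omega)]
              rw [hb, show m - 1 + 1 - 1 = m - 1 by omega]
            have h1 : mu (y.take m ++ y.take m) =
                (mu (y.take (m - 1)) ++ ([b, !b] ++ (mu (y.take (m - 1)) ++ [b])))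
                  ++ [!b] := by
              rw [hz]
              simp [mu_append, mu_cons, mu_nil, List.append_assoc]
            have hmuY : mu y = mu (y.take (m - 1)) ++
                ([b, !b] ++ mu (y.take (m - 1))) := by
              conv_lhs => rw [hy_struct]
              simp [mu_append, mu_cons, mu_nil, List.append_assoc]
            have hmukey : x ++ x = [!b] ++ (mu (y.take m ++ y.take m)).dropLast := by
              rw [h1, List.dropLast_concat, heq, ha, hmuY]
              simp [List.append_assoc]
            have hofzz : OverlapFree (y.take m ++ y.take m) := by
              rw [overlapFree_iff]
              intro h
              exact hnotov ((hasOverlap_mu_dropLast h).mono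
                ⟨[!b], [], by rw [hmukey]; simp⟩)
            obtain ⟨j, hj⟩ := IH m (by omega) (y.take m)
              (by simp [hyl]; omega) (by omega) hofzz
            exact ⟨j + 1, by rcases hj with h | h <;> [left; right] <;>
              rw [pow_succ] <;> omega⟩
          · simp at hlen2; omega
        · rcases mem_E_elim hsE with rfl | ⟨b, rfl⟩ | ⟨b, rfl⟩
          · -- ([a,a], ε) : impossible
            simp only [List.length_nil, List.length_cons] at keyP keyS
            have hyl : y.length = n - 1 := by simp at hlen2; omega
            have u1 := keyP 0 (2 * (m - 1)) (by simp) (by omega)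
              (by omega)
            have u2 := keyP 1 (2 * (m - 1) + 1) (by simp) (by omega)
              (by omega)
            rw [mu_getElem_even y (m - 1) (by omega) (by omega)] at u1
            rw [mu_getElem_odd y (m - 1) (by omega) (by omega)] at u2
            simp only [List.getElem_cons_zero, List.getElem_cons_succ] at u1 u2
            rw [← u1] at u2
            simp at u2
          · simp at hlen2; omega
          · -- ([a,a],[b,b]) : impossible
            simp only [List.length_nil, List.length_cons] at keyP keyS
            have hyl : y.length = n - 2 := by simp at hlen2; omega
            have u1 := keyP 0 (2 * (m - 1)) (by simp) (by omega)
              (by omega)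
            have u2 := keyP 1 (2 * (m - 1) + 1) (by simp) (by omega)
              (by omega)
            rw [mu_getElem_even y (m - 1) (by omega) (by omega)] at u1
            rw [mu_getElem_odd y (m - 1) (by omega) (by omega)] at u2
            simp only [List.getElem_cons_zero, List.getElem_cons_succ] at u1 u2
            rw [← u1] at u2
            simp at u2
      · -- n odd, n = 2m+1, m ≥ 4
        have hm4 : 4 ≤ m := by omega
        have relA : ∀ j (hj : 2 * j + n < 2 * y.length),
            y[j]'(by omega) = !(y[j + m]'(by omega)) := by
          intro j hj
          have := hG (2 * j) (by omega) (by omega)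
          rw [mu_getElem_even y j (by omega) (by omega)] at this
          rw [this, getElem_congr_idx (by omega : 2 * j + n = 2 * (j + m) + 1),
            mu_getElem_odd y (j + m) (by omega) (by omega)]
        have relB : ∀ j (hj : 2 * j + 1 + n < 2 * y.length),
            (!(y[j]'(by omega))) = y[j + m + 1]'(by omega) := by
          intro j hj
          have := hG (2 * j + 1) (by omega) (by omega)
          rw [mu_getElem_odd y j (by omega) (by omega)] at this
          rw [this, getElem_congr_idx (by omega : 2 * j + 1 + n = 2 * (j + m + 1)),
            mu_getElem_even y (j + m + 1) (by omega) (by omega)]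
        have h1 : y[m]'(by omega) = y[m + 1]'(by omega) := by
          have a0 := relA 0 (by omega)
          have b0 := relB 0 (by omega)
          simp only [Nat.zero_add] at a0 b0
          rw [← b0, a0, Bool.not_not]
        have h2 : y[m + 1]'(by omega) = y[m + 2]'(by omega) := by
          have a1 := (relA 1 (by omega)).trans (congrArg (fun t => !t)
            (getElem_congr_idx (show (1:ℕ) + m = m + 1 by omega)))
          have b1 := (relB 1 (by omega)).trans
            (getElem_congr_idx (show (1:ℕ) + m + 1 = m + 2 by omega))
          rw [← b1, a1, Bool.not_not]
        have hinf := triple_infix y m (by omega)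
        have hovy : HasOverlap y :=
          ⟨[y[m]'(by omega), y[m+1]'(by omega), y[m+2]'(by omega)], hinf,
            ⟨y[m]'(by omega), [], by rw [← h1, ← h2.symm.trans h1.symm]; rfl⟩⟩
        exact absurd ((hasOverlap_mu hovy).mono hmuinf) hnotov

theorem stmt_4 (w x : List Bool) (hx : x ≠ []) (hw : w = x ++ x)
    (hof : OverlapFree w) :
    ∃ i : ℕ, 1 ≤ i ∧ (w.length = 2 ^ i ∨ w.length = 3 * 2 ^ i) := by
  have hn : 1 ≤ x.length := List.length_pos_iff.2 hx
  obtain ⟨j, hj⟩ := main_lemma x.length x rfl hn (hw ▸ hof)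
  have hwl : w.length = 2 * x.length := by rw [hw, List.length_append]; omega
  refine ⟨j + 1, by omega, ?_⟩
  rcases hj with h | h
  · left; rw [hwl, h, pow_succ]; ring
  · right; rw [hwl, h, pow_succ]; ring
end

section
/- The binary word (001)²(10)²(01)²(10)²(011001)²(10)²(01)²(10)²(011)² is overlap-free; hence there exists an overlap-free binary word that is a concatenation of nine nonempty squares. -/
def sqw (x : List Bool) : List Bool := x ++ x

def W16 : List Bool :=
  sqw [false,false,true] ++ sqw [true,false] ++ sqw [false,true] ++ sqw [true,false] ++
  sqw [false,true,true,false,false,true] ++ sqw [true,false] ++ sqw [false,true] ++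
  sqw [true,false] ++ sqw [false,true,true]

/-- Boolean overlap-freeness check by indices. -/
def chk (w : List Bool) : Bool :=
  (List.range w.length).all fun i =>
    (List.range w.length).all fun p =>
      !(decide (i + 2 * p + 3 ≤ w.length)) ||
        (List.range (p + 2)).any fun j =>
          w.getD (i + j) false != w.getD (i + j + p + 1) false

/-- periodicity of an embedded overlap -/
lemma period_eq (a : Bool) (x s t : List Bool) (j : ℕ) (hj : j ≤ x.length + 1) :
    (s ++ ((a :: x) ++ ((a :: x) ++ a :: t))).getD (s.length + j) false =
    (s ++ ((a :: x) ++ ((a :: x) ++ a :: t))).getD (s.length + j + (x.length + 1)) false := by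
  set y : List Bool := a :: x with hy
  have hylen : y.length = x.length + 1 := rfl
  rw [List.getD_append_right s _ false (s.length + j) (Nat.le_add_right _ _),
      List.getD_append_right s _ false (s.length + j + (x.length + 1))
        (le_trans (Nat.le_add_right _ _) (Nat.le_add_right _ _)),
      Nat.add_sub_cancel_left]
  have h2 : s.length + j + (x.length + 1) - s.length = j + (x.length + 1) := by omega
  rw [h2]
  rcases Nat.lt_or_ge j (x.length + 1) with h | h
  · rw [List.getD_append y _ false j (by omega),
        List.getD_append_right y _ false (j + (x.length + 1)) (by omega)]
    have : j + (x.length + 1) - y.length = j := by omega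
    rw [this, List.getD_append y _ false j (by omega)]
  · have hjx : j = x.length + 1 := le_antisymm hj h
    subst hjx
    rw [List.getD_append_right y _ false (x.length + 1) (by rw [hylen]),
        List.getD_append_right y _ false (x.length + 1 + (x.length + 1)) (by rw [hylen]; omega),
        hylen]
    have e1 : x.length + 1 - (x.length + 1) = 0 := by omega
    have e2 : x.length + 1 + (x.length + 1) - (x.length + 1) = x.length + 1 := by omega
    rw [e1, e2, List.getD_append y _ false 0 (by rw [hylen]; omega),
        List.getD_append_right y _ false (x.length + 1) (by rw [hylen]), hylen, e1]
    rfl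

lemma chk_overlapFree {w : List Bool} (h : chk w = true) : OverlapFree w := by
  rintro f ⟨s, t, hw⟩ ⟨a, x, hf⟩
  subst hf
  -- rewrite w
  have hw' : w = s ++ ((a :: x) ++ ((a :: x) ++ a :: t)) := by
    rw [← hw]; simp [List.append_assoc]
  have hlen : w.length = s.length + (2 * x.length + 3) + t.length := by
    rw [hw']; simp [List.length_append]; omega
  unfold chk at h
  rw [List.all_eq_true] at h
  have hi : s.length ∈ List.range w.length := by
    rw [List.mem_range]; omega
  have h1 := h _ hi
  rw [List.all_eq_true] at h1
  have hp : x.length ∈ List.range w.length := by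
    rw [List.mem_range]; omega
  have h2 := h1 _ hp
  rw [Bool.or_eq_true, Bool.not_eq_true', decide_eq_false_iff_not] at h2
  rcases h2 with h2 | h2
  · exact h2 (by omega)
  · rw [List.any_eq_true] at h2
    obtain ⟨j, hjmem, hjne⟩ := h2
    rw [List.mem_range] at hjmem
    rw [bne_iff_ne] at hjne
    apply hjne
    have := period_eq a x s t j (by omega)
    rw [← hw'] at this
    have e : s.length + j + x.length + 1 = s.length + j + (x.length + 1) := by omega
    rw [show s.length + j + x.length + 1 = s.length + j + (x.length + 1) from by omega] at *
    convert this using 2 <;> omega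

theorem stmt_16 :
    OverlapFree W16 ∧
    ∃ l : List (List Bool), l.length = 9 ∧
      (∀ s ∈ l, ∃ x : List Bool, x ≠ [] ∧ s = x ++ x) ∧ l.flatten = W16 := by
  constructor
  · exact chk_overlapFree (by decide)
  · refine ⟨[sqw [false,false,true], sqw [true,false], sqw [false,true], sqw [true,false],
      sqw [false,true,true,false,false,true], sqw [true,false], sqw [false,true],
      sqw [true,false], sqw [false,true,true]], rfl, ?_, by simp [W16, sqw]⟩
    intro s hs
    simp only [List.mem_cons, List.not_mem_nil, or_false] at hs
    rcases hs with h|h|h|h|h|h|h|h|h <;> subst h <;>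
      first
        | exact ⟨[false,false,true], by simp, rfl⟩
        | exact ⟨[true,false], by simp, rfl⟩
        | exact ⟨[false,true], by simp, rfl⟩
        | exact ⟨[false,true,true,false,false,true], by simp, rfl⟩
        | exact ⟨[false,true,true], by simp, rfl⟩
end
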